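/- Assume all spins equal one, s_j = 1 for j = 1, …, n, and assume the Bethe equations hold. Write S′(ε_i) = −Σ_{k=1}^M 1/(ε_i − μ_k)². Then for every i = 1, …, n the following two closed equations hold: (i) S′(ε_i) + S(ε_i)² + (2/(ħ g²))((2ε_i − ω)S(ε_i) − 2M) = 2S′(ε_i) + 2Σ_{j≠i} (S(ε_i) − S(ε_j))/(ε_i − ε_j); (ii) 2S(ε_i)S′(ε_i) + (2/(ħ g²))((2ε_i − ω)S′(ε_i) + 2S(ε_i)) = 2Σ_{j≠i} [ S′(ε_i)/(ε_i − ε_j) − (S(ε_i) − S(ε_j))/(ε_i − ε_j)² ]. -/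

import Mathlib

open BigOperators Finset

private lemma sum_erase_comm {M : ℕ} (f : Fin M → Fin M → ℂ) :
    ∑ m, ∑ k ∈ Finset.univ.erase m, f m k = ∑ m, ∑ k ∈ Finset.univ.erase m, f k m := by
  rw [Finset.sum_comm' (s' := fun k => Finset.univ.erase k) (t' := Finset.univ)
    (by intro x y; simp [mem_erase, ne_comm])]

private lemma partial_frac_sq (A B d : ℂ)
    (hbase : 1 / B * (1 / A) = 1 / A / d + 1 / B / d) :
    1 / B * (1 / A ^ 2) = 1 / A ^ 2 / d + 1 / A / d ^ 2 + 1 / B / d ^ 2 := by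
  calc 1 / B * (1 / A ^ 2) = 1 / B * (1 / A) * (1 / A) := by ring
    _ = (1 / A / d + 1 / B / d) * (1 / A) := by rw [hbase]
    _ = 1 / A ^ 2 / d + 1 / B * (1 / A) / d := by ring
    _ = 1 / A ^ 2 / d + (1 / A / d + 1 / B / d) / d := by rw [hbase]
    _ = 1 / A ^ 2 / d + 1 / A / d ^ 2 + 1 / B / d ^ 2 := by ring

set_option maxHeartbeats 2000000 in
/-- for spins one, the Bethe equations imply the two closed
equations for `S(ε_i)` and `S'(ε_i)`. -/
theorem closed_equations_spin_one
    (n M : ℕ) (hbar g ω : ℂ) (hhbar : hbar ≠ 0) (hg : g ≠ 0)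
    (ε : Fin n → ℂ) (hε : Function.Injective ε) (s : Fin n → ℂ)
    (hs : ∀ j, s j = 1)
    (μ : Fin M → ℂ) (hμ : Function.Injective μ)
    (hμε : ∀ i j, μ i ≠ ε j)
    (a S S' : ℂ → ℂ)
    (ha : ∀ z, a z = (2 * z - ω) / g ^ 2 - ∑ j, hbar * s j / (z - ε j))
    (hS : ∀ z, S z = ∑ i, 1 / (z - μ i))
    (hS' : ∀ i, S' (ε i) = -∑ k, 1 / (ε i - μ k) ^ 2)
    (bethe : ∀ i, a (μ i) + ∑ k ∈ Finset.univ.erase i, hbar / (μ i - μ k) = 0) :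
    ∀ i,
      (S' (ε i) + (S (ε i)) ^ 2
          + (2 / (hbar * g ^ 2)) * ((2 * ε i - ω) * S (ε i) - 2 * M)
        = 2 * S' (ε i)
          + 2 * ∑ j ∈ Finset.univ.erase i, (S (ε i) - S (ε j)) / (ε i - ε j))
      ∧
      (2 * S (ε i) * S' (ε i)
          + (2 / (hbar * g ^ 2)) * ((2 * ε i - ω) * S' (ε i) + 2 * S (ε i))
        = 2 * ∑ j ∈ Finset.univ.erase i,
            (S' (ε i) / (ε i - ε j) - (S (ε i) - S (ε j)) / (ε i - ε j) ^ 2)) := by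
  intro i
  have hA : ∀ m, ε i - μ m ≠ 0 := fun m => sub_ne_zero.mpr (Ne.symm (hμε m i))
  have hB : ∀ (j : Fin n) (m : Fin M), μ m - ε j ≠ 0 := fun j m => sub_ne_zero.mpr (hμε m j)
  have hμμ : ∀ {m k : Fin M}, m ≠ k → μ m - μ k ≠ 0 :=
    fun {m k} h => sub_ne_zero.mpr fun e => h (hμ e)
  have hdj : ∀ {j : Fin n}, j ≠ i → ε i - ε j ≠ 0 :=
    fun {j} hj => sub_ne_zero.mpr fun e => hj (hε e).symm
  have haμ : ∀ m : Fin M, a (μ m) = (2 * μ m - ω) / g ^ 2 - hbar * ∑ j, 1 / (μ m - ε j) := by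
    intro m
    rw [ha, Finset.mul_sum]
    congr 1
    exact Finset.sum_congr rfl fun j _ => by rw [hs]; ring
  -- the Bethe equations, cleared of denominators in `hbar, g`
  have hb2 : ∀ m : Fin M, (2 * μ m - ω) - hbar * g ^ 2 * ∑ j, 1 / (μ m - ε j)
      + hbar * g ^ 2 * ∑ k ∈ Finset.univ.erase m, 1 / (μ m - μ k) = 0 := by
    intro m
    have hb := bethe m
    rw [haμ m] at hb
    have he : ∑ k ∈ Finset.univ.erase m, hbar / (μ m - μ k)
        = hbar * ∑ k ∈ Finset.univ.erase m, 1 / (μ m - μ k) := by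
      rw [Finset.mul_sum]; exact Finset.sum_congr rfl fun k _ => by ring
    rw [he] at hb
    field_simp at hb
    linear_combination hb
  -- weighted sums of the Bethe equations
  have hwz : ∀ w : Fin M → ℂ,
      (∑ m, (2 * μ m - ω) * w m)
        - hbar * g ^ 2 * (∑ m, (∑ j, 1 / (μ m - ε j)) * w m)
        + hbar * g ^ 2 * (∑ m, (∑ k ∈ Finset.univ.erase m, 1 / (μ m - μ k)) * w m) = 0 := by
    intro w
    rw [Finset.mul_sum, Finset.mul_sum, ← Finset.sum_sub_distrib, ← Finset.sum_add_distrib]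
    exact Finset.sum_eq_zero fun m _ => by linear_combination (w m) * hb2 m
  have hSj : ∀ j : Fin n, ∑ m, 1 / (μ m - ε j) = - S (ε j) := by
    intro j
    rw [hS (ε j), ← Finset.sum_neg_distrib]
    refine Finset.sum_congr rfl fun m _ => ?_
    rw [← div_neg, neg_sub]
  -- Part 1 : weight 1/(ε i - μ m)
  have hA1 : ∑ m, (2 * μ m - ω) * (1 / (ε i - μ m))
      = (2 * ε i - ω) * S (ε i) - 2 * M := by
    have e : ∀ m : Fin M, (2 * μ m - ω) * (1 / (ε i - μ m))
        = (2 * ε i - ω) * (1 / (ε i - μ m)) - 2 := by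
      intro m
      have h1 := hA m
      field_simp
      ring
    rw [Finset.sum_congr rfl fun m _ => e m, Finset.sum_sub_distrib, ← Finset.mul_sum,
      Finset.sum_const, Finset.card_univ, Fintype.card_fin, nsmul_eq_mul, ← hS (ε i)]
    ring
  have hB1 : ∑ m, (∑ j, 1 / (μ m - ε j)) * (1 / (ε i - μ m))
      = (∑ j ∈ Finset.univ.erase i, (S (ε i) - S (ε j)) / (ε i - ε j))
        + -(∑ m, 1 / (ε i - μ m) ^ 2) := by
    have e1 : ∀ m : Fin M, (∑ j, 1 / (μ m - ε j)) * (1 / (ε i - μ m))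
        = ∑ j, (1 / (μ m - ε j)) * (1 / (ε i - μ m)) := fun m => Finset.sum_mul _ _ _
    rw [Finset.sum_congr rfl fun m _ => e1 m, Finset.sum_comm,
      ← Finset.sum_erase_add _ _ (Finset.mem_univ i)]
    congr 1
    · refine Finset.sum_congr rfl fun j hj => ?_
      have hd := hdj (Finset.mem_erase.mp hj).1
      have e2 : ∀ m : Fin M, (1 / (μ m - ε j)) * (1 / (ε i - μ m))
          = (1 / (ε i - μ m)) / (ε i - ε j) + (1 / (μ m - ε j)) / (ε i - ε j) := by
        intro m
        have h1 := hA m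
        have h2 := hB j m
        field_simp
        ring
      rw [Finset.sum_congr rfl fun m _ => e2 m, Finset.sum_add_distrib, ← Finset.sum_div,
        ← Finset.sum_div, hSj j, ← hS (ε i)]
      ring
    · have e3 : ∀ m : Fin M, (1 / (μ m - ε i)) * (1 / (ε i - μ m))
          = -(1 / (ε i - μ m) ^ 2) := by
        intro m
        have h1 := hA m
        have h2 := hB i m
        field_simp
        ring
      rw [Finset.sum_congr rfl fun m _ => e3 m, Finset.sum_neg_distrib]
  have hD1 : ∑ m, (∑ k ∈ Finset.univ.erase m, 1 / (μ m - μ k)) * (1 / (ε i - μ m))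
      = ((S (ε i)) ^ 2 - ∑ m, 1 / (ε i - μ m) ^ 2) / 2 := by
    have e1 : ∀ m : Fin M, (∑ k ∈ Finset.univ.erase m, 1 / (μ m - μ k)) * (1 / (ε i - μ m))
        = ∑ k ∈ Finset.univ.erase m, (1 / (μ m - μ k)) * (1 / (ε i - μ m)) :=
      fun m => Finset.sum_mul _ _ _
    rw [Finset.sum_congr rfl fun m _ => e1 m]
    have h2D : 2 * (∑ m, ∑ k ∈ Finset.univ.erase m, (1 / (μ m - μ k)) * (1 / (ε i - μ m)))
        = (S (ε i)) ^ 2 - ∑ m, 1 / (ε i - μ m) ^ 2 := by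
      have hswap := sum_erase_comm (fun m k => (1 / (μ m - μ k)) * (1 / (ε i - μ m)))
      calc 2 * (∑ m, ∑ k ∈ Finset.univ.erase m, (1 / (μ m - μ k)) * (1 / (ε i - μ m)))
          = (∑ m, ∑ k ∈ Finset.univ.erase m, (1 / (μ m - μ k)) * (1 / (ε i - μ m)))
            + ∑ m, ∑ k ∈ Finset.univ.erase m, (1 / (μ k - μ m)) * (1 / (ε i - μ k)) := by
            rw [← hswap]; ring
        _ = ∑ m, ∑ k ∈ Finset.univ.erase m,
              ((1 / (μ m - μ k)) * (1 / (ε i - μ m)) + (1 / (μ k - μ m)) * (1 / (ε i - μ k))) := by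
            rw [← Finset.sum_add_distrib]
            exact Finset.sum_congr rfl fun m _ => (Finset.sum_add_distrib).symm
        _ = ∑ m, ∑ k ∈ Finset.univ.erase m, (1 / (ε i - μ m)) * (1 / (ε i - μ k)) := by
            refine Finset.sum_congr rfl fun m _ => Finset.sum_congr rfl fun k hk => ?_
            have hkm : k ≠ m := (Finset.mem_erase.mp hk).1
            have h1 := hμμ (Ne.symm hkm)
            have h2 := hμμ hkm
            have h3 := hA m
            have h4 := hA k
            field_simp
            ring
        _ = ∑ m, (1 / (ε i - μ m)) * ((∑ k, 1 / (ε i - μ k)) - 1 / (ε i - μ m)) := by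
            refine Finset.sum_congr rfl fun m _ => ?_
            rw [← Finset.mul_sum, Finset.sum_erase_eq_sub (Finset.mem_univ m)]
        _ = (S (ε i)) ^ 2 - ∑ m, 1 / (ε i - μ m) ^ 2 := by
            have e : ∀ m : Fin M, (1 / (ε i - μ m)) * ((∑ k, 1 / (ε i - μ k)) - 1 / (ε i - μ m))
                = (1 / (ε i - μ m)) * (∑ k, 1 / (ε i - μ k)) - 1 / (ε i - μ m) ^ 2 := by
              intro m
              have h1 := hA m
              field_simp
            rw [Finset.sum_congr rfl fun m _ => e m, Finset.sum_sub_distrib, ← Finset.sum_mul,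
              ← hS (ε i)]
            ring
    linear_combination h2D / 2
  have hz1 := hwz (fun m => 1 / (ε i - μ m))
  rw [hA1, hB1, hD1] at hz1
  -- Part 2 : weight 1/(ε i - μ m)^2
  have hA2 : ∑ m, (2 * μ m - ω) * (1 / (ε i - μ m) ^ 2)
      = (2 * ε i - ω) * (∑ m, 1 / (ε i - μ m) ^ 2) - 2 * S (ε i) := by
    have e : ∀ m : Fin M, (2 * μ m - ω) * (1 / (ε i - μ m) ^ 2)
        = (2 * ε i - ω) * (1 / (ε i - μ m) ^ 2) - 2 * (1 / (ε i - μ m)) := by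
      intro m
      have h1 := hA m
      field_simp
      ring
    rw [Finset.sum_congr rfl fun m _ => e m, Finset.sum_sub_distrib, ← Finset.mul_sum,
      ← Finset.mul_sum, ← hS (ε i)]
  have hB2 : ∑ m, (∑ j, 1 / (μ m - ε j)) * (1 / (ε i - μ m) ^ 2)
      = (∑ j ∈ Finset.univ.erase i,
          ((∑ m, 1 / (ε i - μ m) ^ 2) / (ε i - ε j) + (S (ε i) - S (ε j)) / (ε i - ε j) ^ 2))
        + -(∑ m, 1 / (ε i - μ m) ^ 3) := by
    have e1 : ∀ m : Fin M, (∑ j, 1 / (μ m - ε j)) * (1 / (ε i - μ m) ^ 2)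
        = ∑ j, (1 / (μ m - ε j)) * (1 / (ε i - μ m) ^ 2) := fun m => Finset.sum_mul _ _ _
    rw [Finset.sum_congr rfl fun m _ => e1 m, Finset.sum_comm,
      ← Finset.sum_erase_add _ _ (Finset.mem_univ i)]
    congr 1
    · refine Finset.sum_congr rfl fun j hj => ?_
      have hd := hdj (Finset.mem_erase.mp hj).1
      have base : ∀ m : Fin M, (1 / (μ m - ε j)) * (1 / (ε i - μ m))
          = (1 / (ε i - μ m)) / (ε i - ε j) + (1 / (μ m - ε j)) / (ε i - ε j) := by
        intro m
        have h1 := hA m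
        have h2 := hB j m
        field_simp
        ring
      have e2 : ∀ m : Fin M, (1 / (μ m - ε j)) * (1 / (ε i - μ m) ^ 2)
          = (1 / (ε i - μ m) ^ 2) / (ε i - ε j) + (1 / (ε i - μ m)) / (ε i - ε j) ^ 2
            + (1 / (μ m - ε j)) / (ε i - ε j) ^ 2 :=
        fun m => partial_frac_sq _ _ _ (base m)
      rw [Finset.sum_congr rfl fun m _ => e2 m, Finset.sum_add_distrib, Finset.sum_add_distrib,
        ← Finset.sum_div, ← Finset.sum_div, ← Finset.sum_div, hSj j, ← hS (ε i)]
      ring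
    · have e3 : ∀ m : Fin M, (1 / (μ m - ε i)) * (1 / (ε i - μ m) ^ 2)
          = -(1 / (ε i - μ m) ^ 3) := by
        intro m
        have h1 := hA m
        have h2 := hB i m
        field_simp
        ring
      rw [Finset.sum_congr rfl fun m _ => e3 m, Finset.sum_neg_distrib]
  have hD2 : ∑ m, (∑ k ∈ Finset.univ.erase m, 1 / (μ m - μ k)) * (1 / (ε i - μ m) ^ 2)
      = (∑ m, 1 / (ε i - μ m) ^ 2) * S (ε i) - ∑ m, 1 / (ε i - μ m) ^ 3 := by
    have e1 : ∀ m : Fin M, (∑ k ∈ Finset.univ.erase m, 1 / (μ m - μ k)) * (1 / (ε i - μ m) ^ 2)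
        = ∑ k ∈ Finset.univ.erase m, (1 / (μ m - μ k)) * (1 / (ε i - μ m) ^ 2) :=
      fun m => Finset.sum_mul _ _ _
    rw [Finset.sum_congr rfl fun m _ => e1 m]
    have h2D : 2 * (∑ m, ∑ k ∈ Finset.univ.erase m, (1 / (μ m - μ k)) * (1 / (ε i - μ m) ^ 2))
        = 2 * ((∑ m, 1 / (ε i - μ m) ^ 2) * S (ε i) - ∑ m, 1 / (ε i - μ m) ^ 3) := by
      have hswap := sum_erase_comm (fun m k => (1 / (μ m - μ k)) * (1 / (ε i - μ m) ^ 2))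
      calc 2 * (∑ m, ∑ k ∈ Finset.univ.erase m, (1 / (μ m - μ k)) * (1 / (ε i - μ m) ^ 2))
          = (∑ m, ∑ k ∈ Finset.univ.erase m, (1 / (μ m - μ k)) * (1 / (ε i - μ m) ^ 2))
            + ∑ m, ∑ k ∈ Finset.univ.erase m, (1 / (μ k - μ m)) * (1 / (ε i - μ k) ^ 2) := by
            rw [← hswap]; ring
        _ = ∑ m, ∑ k ∈ Finset.univ.erase m,
              ((1 / (μ m - μ k)) * (1 / (ε i - μ m) ^ 2)
                + (1 / (μ k - μ m)) * (1 / (ε i - μ k) ^ 2)) := by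
            rw [← Finset.sum_add_distrib]
            exact Finset.sum_congr rfl fun m _ => (Finset.sum_add_distrib).symm
        _ = ∑ m, ∑ k ∈ Finset.univ.erase m,
              ((1 / (ε i - μ m) ^ 2) * (1 / (ε i - μ k))
                + (1 / (ε i - μ m)) * (1 / (ε i - μ k) ^ 2)) := by
            refine Finset.sum_congr rfl fun m _ => Finset.sum_congr rfl fun k hk => ?_
            have hkm : k ≠ m := (Finset.mem_erase.mp hk).1
            have h1 := hμμ (Ne.symm hkm)
            have h2 := hμμ hkm
            have h3 := hA m
            have h4 := hA k
            field_simp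
            ring
        _ = ∑ m, ((1 / (ε i - μ m) ^ 2) * ((∑ k, 1 / (ε i - μ k)) - 1 / (ε i - μ m))
              + (1 / (ε i - μ m)) * ((∑ k, 1 / (ε i - μ k) ^ 2) - 1 / (ε i - μ m) ^ 2)) := by
            refine Finset.sum_congr rfl fun m _ => ?_
            rw [Finset.sum_add_distrib, ← Finset.mul_sum, ← Finset.mul_sum,
              Finset.sum_erase_eq_sub (Finset.mem_univ m),
              Finset.sum_erase_eq_sub (Finset.mem_univ m)]
        _ = 2 * ((∑ m, 1 / (ε i - μ m) ^ 2) * S (ε i) - ∑ m, 1 / (ε i - μ m) ^ 3) := by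
            have e : ∀ m : Fin M, (1 / (ε i - μ m) ^ 2) * ((∑ k, 1 / (ε i - μ k)) - 1 / (ε i - μ m))
                  + (1 / (ε i - μ m)) * ((∑ k, 1 / (ε i - μ k) ^ 2) - 1 / (ε i - μ m) ^ 2)
                = (1 / (ε i - μ m) ^ 2) * (∑ k, 1 / (ε i - μ k))
                  + (1 / (ε i - μ m)) * (∑ k, 1 / (ε i - μ k) ^ 2)
                  - 2 * (1 / (ε i - μ m) ^ 3) := by
              intro m
              have h1 := hA m
              field_simp
              ring
            rw [Finset.sum_congr rfl fun m _ => e m, Finset.sum_sub_distrib,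
              Finset.sum_add_distrib, ← Finset.sum_mul, ← Finset.sum_mul, ← Finset.mul_sum,
              ← hS (ε i)]
            ring
    linear_combination h2D / 2
  have hz2 := hwz (fun m => 1 / (ε i - μ m) ^ 2)
  rw [hA2, hB2, hD2] at hz2
  have hT1 : ∑ j ∈ Finset.univ.erase i, (S (ε i) - S (ε j)) / (ε i - ε j)
      = ∑ j, (S (ε i) - S (ε j)) / (ε i - ε j) := Finset.sum_erase _ (by simp)
  have hT2 : ∑ j ∈ Finset.univ.erase i,
        ((∑ m, 1 / (ε i - μ m) ^ 2) / (ε i - ε j) + (S (ε i) - S (ε j)) / (ε i - ε j) ^ 2)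
      = ∑ j, ((∑ m, 1 / (ε i - μ m) ^ 2) / (ε i - ε j) + (S (ε i) - S (ε j)) / (ε i - ε j) ^ 2) :=
    Finset.sum_erase _ (by simp)
  rw [hT1] at hz1
  rw [hT2] at hz2
  constructor
  · rw [hS' i, hT1]
    field_simp
    linear_combination 2 * hz1
  · have hV : ∑ j ∈ Finset.univ.erase i,
        ((-∑ k, 1 / (ε i - μ k) ^ 2) / (ε i - ε j) - (S (ε i) - S (ε j)) / (ε i - ε j) ^ 2)
        = -∑ j ∈ Finset.univ.erase i,
            ((∑ m, 1 / (ε i - μ m) ^ 2) / (ε i - ε j) + (S (ε i) - S (ε j)) / (ε i - ε j) ^ 2) := by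
      calc ∑ j ∈ Finset.univ.erase i,
            ((-∑ k, 1 / (ε i - μ k) ^ 2) / (ε i - ε j) - (S (ε i) - S (ε j)) / (ε i - ε j) ^ 2)
          = ∑ j ∈ Finset.univ.erase i,
              -(((∑ m, 1 / (ε i - μ m) ^ 2) / (ε i - ε j)
                + (S (ε i) - S (ε j)) / (ε i - ε j) ^ 2)) :=
            Finset.sum_congr rfl fun j _ => by ring
        _ = -∑ j ∈ Finset.univ.erase i,
              ((∑ m, 1 / (ε i - μ m) ^ 2) / (ε i - ε j)
                + (S (ε i) - S (ε j)) / (ε i - ε j) ^ 2) := Finset.sum_neg_distrib _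
    rw [hS' i, hV, hT2]
    generalize (∑ j, ((∑ m, 1 / (ε i - μ m) ^ 2) / (ε i - ε j) + (S (ε i) - S (ε j)) / (ε i - ε j) ^ 2)) = T at hz2 ⊢
    field_simp
    linear_combination (-1) * hz2
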